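/- Let f be analytic on the open unit disc 𝔻 with f' never zero, and suppose Re(1 + z f''(z)/f'(z)) > 0 for all z ∈ 𝔻. Fix θ, γ ∈ ℝ and n ∈ ℕ, n ≥ 1, and define r on 𝔻 by r'(z) = f'(z)/(1 - e^{i(θ-2γ)} z^n). Then Re(n + 2 + 2 z r''(z)/r'(z)) > 0 for all z ∈ 𝔻. -/

import Mathlib

open Metric Complex in
theorem stmt_7 (f f' f'' R'' : ℂ → ℂ) (θ γ : ℝ) (n : ℕ) (hn : 1 ≤ n)
    (hf' : ∀ z ∈ ball (0 : ℂ) 1, HasDerivAt f (f' z) z)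
    (hf'' : ∀ z ∈ ball (0 : ℂ) 1, HasDerivAt f' (f'' z) z)
    (hf'ne : ∀ z ∈ ball (0 : ℂ) 1, f' z ≠ 0)
    (hre : ∀ z ∈ ball (0 : ℂ) 1, (1 + z * f'' z / f' z).re > 0)
    (hR'' : ∀ z ∈ ball (0 : ℂ) 1,
      HasDerivAt (fun w => f' w / (1 - Complex.exp ((θ - 2 * γ) * Complex.I) * w ^ n))
        (R'' z) z) :
    ∀ z ∈ ball (0 : ℂ) 1,
      ((n : ℂ) + 2 + 2 * z * R'' z /
        (f' z / (1 - Complex.exp ((θ - 2 * γ) * Complex.I) * z ^ n))).re > 0 := by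
  obtain ⟨m, rfl⟩ : ∃ m, n = m + 1 := ⟨n - 1, (Nat.succ_pred_eq_of_pos hn).symm⟩
  intro z hz
  set e : ℂ := Complex.exp ((θ - 2 * γ) * Complex.I) with he
  have habs_e : ‖e‖ = 1 := by
    rw [he, Complex.norm_exp]
    simp
  have hz1 : ‖z‖ < 1 := by simpa using hz
  set w : ℂ := e * z ^ (m + 1) with hw
  have habsw : ‖w‖ < 1 := by
    rw [hw, norm_mul, habs_e, one_mul, norm_pow]
    exact pow_lt_one₀ (norm_nonneg z) hz1 (Nat.succ_ne_zero m)
  have hd : (1 : ℂ) - w ≠ 0 := by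
    intro h
    have : w = 1 := by linear_combination -h
    rw [this] at habsw; simp at habsw
  have hfz : f' z ≠ 0 := hf'ne z hz
  -- compute the derivative R'' z
  have hden : HasDerivAt (fun x : ℂ => 1 - e * x ^ (m + 1)) (-(e * ((m + 1) * z ^ m))) z := by
    have h1 : HasDerivAt (fun x : ℂ => x ^ (m + 1)) (((m : ℂ) + 1) * z ^ m) z := by
      simpa using hasDerivAt_pow (m + 1) z
    simpa using (h1.const_mul e).const_sub 1
  have hD : HasDerivAt (fun x => f' x / (1 - e * x ^ (m + 1)))
      ((f'' z * (1 - w) - f' z * (-(e * ((m + 1) * z ^ m)))) / (1 - w) ^ 2) z :=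
    (hf'' z hz).div hden hd
  have hRval : R'' z = (f'' z * (1 - w) - f' z * (-(e * ((m + 1) * z ^ m)))) / (1 - w) ^ 2 :=
    (hR'' z hz).unique hD
  -- rewrite the expression
  have key : ((m + 1 : ℕ) : ℂ) + 2 + 2 * z * R'' z / (f' z / (1 - w)) =
      2 * (1 + z * f'' z / f' z) + ((m : ℂ) + 1) * (1 + w) / (1 - w) := by
    rw [hRval]
    push_cast
    field_simp
    ring
  rw [key]
  have h1 : (2 * (1 + z * f'' z / f' z)).re = 2 * (1 + z * f'' z / f' z).re := by
    simp [Complex.mul_re]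
  have h2 : (((m : ℂ) + 1) * (1 + w) / (1 - w)).re =
      ((m : ℝ) + 1) * (((1 + w) / (1 - w)).re) := by
    rw [mul_div_assoc]
    have : ((m : ℂ) + 1) = ((m + 1 : ℝ) : ℂ) := by push_cast; ring
    rw [this, Complex.re_ofReal_mul]
  have h3 : ((1 + w) / (1 - w)).re = (1 - Complex.normSq w) / Complex.normSq (1 - w) := by
    rw [Complex.div_re]
    simp [Complex.normSq_apply]
    ring
  have h4 : (0:ℝ) < (1 - Complex.normSq w) / Complex.normSq (1 - w) := by
    apply div_pos
    · have := Complex.sq_norm w ▸ (by nlinarith [norm_nonneg w] :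
        ‖w‖ ^ 2 < 1)
      linarith
    · exact Complex.normSq_pos.mpr hd
  have h5 := hre z hz
  rw [Complex.add_re, h1, h2, h3]
  have : (0:ℝ) < (m : ℝ) + 1 := by positivity
  nlinarith
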